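/- Along OMWU dynamics, the KL projection onto the Nash equilibrium set is invariant: p(π̂^(1)) = p(π̂^(t)) for all t ≥ 1, where p(π) = argmin_{π'∈M} D_KL(π' ∥ π). -/

import Mathlib

open Matrix

/-- Kullback–Leibler divergence between finitely supported vectors. -/
noncomputable def klDiv {A : Type*} [Fintype A] (p q : A → ℝ) : ℝ :=
  ∑ a, p a * Real.log (p a / q a)

theorem stmt_4 {A : Type*} [Fintype A] [Nonempty A]
    (P : Matrix A A ℝ) (hP : P + Pᵀ = 0)
    (M : Set (A → ℝ))
    (hM : M = {π | (∀ a, 0 ≤ π a) ∧ (∑ a, π a = 1) ∧ (∀ a, P.mulVec π a ≤ 0)})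
    (hfull : ∃ q ∈ M, ∀ a, 0 < q a)
    (η : ℝ) (pi hpi : ℕ → A → ℝ) (Mn Mh : ℕ → ℝ)
    (hpidist : ∀ t, (∀ a, 0 < pi t a) ∧ ∑ a, pi t a = 1)
    (hhpidist : ∀ t, (∀ a, 0 < hpi t a) ∧ ∑ a, hpi t a = 1)
    (hinit : pi 0 = hpi 1)
    (hupd : ∀ t, 1 ≤ t → ∀ a,
      Real.log (pi t a) = Real.log (hpi t a) + η * P.mulVec (pi (t - 1)) a - Mn t)
    (hupdh : ∀ t, 1 ≤ t → ∀ a,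
      Real.log (hpi (t + 1) a) = Real.log (hpi t a) + η * P.mulVec (pi t) a - Mh (t + 1)) :
    ∀ t, 1 ≤ t → ∀ q : A → ℝ,
      (q ∈ M ∧ ∀ r ∈ M, klDiv q (hpi 1) ≤ klDiv r (hpi 1)) ↔
      (q ∈ M ∧ ∀ r ∈ M, klDiv q (hpi t) ≤ klDiv r (hpi t)) := by
  obtain ⟨qs, hqsM, hqspos⟩ := hfull
  have hT' : Pᵀ = -P := by
    have h := hP
    rw [add_comm] at h
    exact eq_neg_of_add_eq_zero_left h
  -- skew: x ⬝ᵥ P.mulVec y = - (y ⬝ᵥ P.mulVec x)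
  have hskew : ∀ x y : A → ℝ, x ⬝ᵥ P.mulVec y = -(y ⬝ᵥ P.mulVec x) := by
    intro x y
    rw [Matrix.dotProduct_mulVec, ← Matrix.mulVec_transpose, hT', Matrix.neg_mulVec,
      neg_dotProduct, dotProduct_comm]
  -- P.mulVec qs = 0
  have hPqs : ∀ a, P.mulVec qs a = 0 := by
    have hself : qs ⬝ᵥ P.mulVec qs = 0 := by
      have := hskew qs qs; linarith
    have hqsP : ∀ a, P.mulVec qs a ≤ 0 := by
      rw [hM] at hqsM; exact hqsM.2.2
    intro a
    have h0 : ∀ b ∈ Finset.univ, qs b * P.mulVec qs b ≤ 0 := fun b _ =>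
      mul_nonpos_of_nonneg_of_nonpos (hqspos b).le (hqsP b)
    have := (Finset.sum_eq_zero_iff_of_nonpos h0).mp hself a (Finset.mem_univ a)
    rcases mul_eq_zero.mp this with h | h
    · exact absurd h (hqspos a).ne'
    · exact h
  -- P.mulVec q = 0 for all q ∈ M
  have hPq : ∀ q ∈ M, ∀ a, P.mulVec q a = 0 := by
    intro q hq
    rw [hM] at hq
    obtain ⟨hq0, hq1, hqP⟩ := hq
    have hdot : qs ⬝ᵥ P.mulVec q = 0 := by
      rw [hskew]
      have : q ⬝ᵥ P.mulVec qs = 0 := by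
        simp only [dotProduct]
        exact Finset.sum_eq_zero fun a _ => by rw [hPqs a, mul_zero]
      rw [this, neg_zero]
    intro a
    have h0 : ∀ b ∈ Finset.univ, qs b * P.mulVec q b ≤ 0 := fun b _ =>
      mul_nonpos_of_nonneg_of_nonpos (hqspos b).le (hqP b)
    have := (Finset.sum_eq_zero_iff_of_nonpos h0).mp hdot a (Finset.mem_univ a)
    rcases mul_eq_zero.mp this with h | h
    · exact absurd h (hqspos a).ne'
    · exact h
  -- q ⬝ᵥ P.mulVec x = 0 for q ∈ M, any x
  have hdot0 : ∀ q ∈ M, ∀ x : A → ℝ, q ⬝ᵥ P.mulVec x = 0 := by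
    intro q hq x
    rw [hskew]
    have : x ⬝ᵥ P.mulVec q = 0 := by
      simp only [dotProduct]
      exact Finset.sum_eq_zero fun a _ => by rw [hPq q hq a, mul_zero]
    rw [this, neg_zero]
  -- one-step shift
  have hstep : ∀ t, 1 ≤ t → ∀ q ∈ M,
      klDiv q (hpi (t + 1)) = klDiv q (hpi t) + Mh (t + 1) := by
    intro t ht q hq
    have hq' := hq
    rw [hM] at hq'
    obtain ⟨hq0, hq1, _⟩ := hq'
    have hterm : ∀ a, q a * Real.log (q a / hpi (t + 1) a)
        = q a * Real.log (q a / hpi t a) + q a * Mh (t + 1)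
          - η * (q a * P.mulVec (pi t) a) := by
      intro a
      rcases eq_or_lt_of_le (hq0 a) with h | h
      · rw [← h]; ring
      · have hpt := (hhpidist t).1 a
        have hpt1 := (hhpidist (t + 1)).1 a
        rw [Real.log_div h.ne' hpt1.ne', Real.log_div h.ne' hpt.ne',
          hupdh t ht a]
        ring
    have hsum : klDiv q (hpi (t + 1)) =
        klDiv q (hpi t) + (∑ a, q a) * Mh (t + 1) - η * (q ⬝ᵥ P.mulVec (pi t)) := by
      unfold klDiv
      simp only [dotProduct]
      rw [Finset.sum_congr rfl fun a _ => hterm a, Finset.sum_sub_distrib,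
        Finset.sum_add_distrib, ← Finset.sum_mul, ← Finset.mul_sum]
    rw [hsum, hq1, one_mul, hdot0 q hq, mul_zero, sub_zero]
  -- cumulative constant shift
  have hconst : ∀ t, 1 ≤ t → ∃ c : ℝ, ∀ q ∈ M, klDiv q (hpi t) = klDiv q (hpi 1) + c := by
    intro t ht
    induction t, ht using Nat.le_induction with
    | base => exact ⟨0, fun q _ => by ring⟩
    | succ n hn ih =>
      obtain ⟨c, hc⟩ := ih
      exact ⟨c + Mh (n + 1), fun q hq => by rw [hstep n hn q hq, hc q hq]; ring⟩
  intro t ht q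
  obtain ⟨c, hc⟩ := hconst t ht
  constructor
  · rintro ⟨hq, hmin⟩
    exact ⟨hq, fun r hr => by rw [hc q hq, hc r hr]; exact add_le_add_left (hmin r hr) c⟩
  · rintro ⟨hq, hmin⟩
    refine ⟨hq, fun r hr => ?_⟩
    have := hmin r hr
    rw [hc q hq, hc r hr] at this
    linarith
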